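/- Let n ≥ 2, let r₁,…,r_n, s₁,…,s_n be nonzero elements of a field F, and let x₁,…,x_n ∈ F be pairwise distinct. Then for any f₁,…,f_{n−1}, g₁,…,g_{n−1} ∈ F there exist unipotent upper triangular matrices v, w ∈ GL_n(F) such that, for all 1 ≤ i ≤ n−1, the (i, i+1) entry of v⁻¹·diag(r₁⁻¹s₁,…,r_n⁻¹s_n)·w equals f_i and the (i, i+1) entry of w⁻¹·diag(s₁⁻¹r₁x₁,…,s_n⁻¹r_nx_n)·v equals g_i. -/

import Mathlib

noncomputable section

open Matrix

/-- A matrix is unipotent upper triangular if it is upper triangular with all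
diagonal entries equal to `1`. -/
def IsUnipotentUpper {R : Type*} [CommRing R] {n : ℕ}
    (u : Matrix (Fin n) (Fin n) R) : Prop :=
  (∀ i j : Fin n, j < i → u i j = 0) ∧ ∀ i : Fin n, u i i = 1

section Band

variable {F : Type*} [Field F]

/-- Unipotent matrix with superdiagonal entries `a`. -/
def band (n : ℕ) (a : ℕ → F) : Matrix (Fin n) (Fin n) F :=
  Matrix.of fun i j => if (j : ℕ) = (i : ℕ) then 1 else
    if (j : ℕ) = (i : ℕ) + 1 then a i else 0

/-- Explicit inverse of `band n a`. -/
def bandInv (n : ℕ) (a : ℕ → F) : Matrix (Fin n) (Fin n) F :=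
  Matrix.of fun i j => if (i : ℕ) ≤ (j : ℕ) then
    (-1 : F) ^ ((j : ℕ) - (i : ℕ)) * ∏ k ∈ Finset.Ico (i : ℕ) (j : ℕ), a k else 0

lemma band_unipotent (n : ℕ) (a : ℕ → F) : IsUnipotentUpper (band n a) := by
  constructor
  · intro i j h
    simp only [band, of_apply]
    rw [if_neg (by omega), if_neg (by omega)]
  · intro i; simp [band]

lemma band_mul_bandInv (n : ℕ) (a : ℕ → F) : band n a * bandInv n a = 1 := by
  ext i j
  rw [Matrix.mul_apply]
  have hsplit : ∀ k : Fin n, band n a i k * bandInv n a k j =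
      (if k = i then bandInv n a i j else 0)
      + (if (k : ℕ) = (i : ℕ) + 1 then a i * bandInv n a k j else 0) := by
    intro k
    rcases eq_or_ne k i with rfl | hk
    · simp [band]
    · have hk' : (k : ℕ) ≠ (i : ℕ) := fun h => hk (Fin.ext h)
      simp only [band, of_apply, if_neg hk', if_neg hk, zero_add]
      split_ifs <;> ring
  rw [Finset.sum_congr rfl fun k _ => hsplit k, Finset.sum_add_distrib,
    Finset.sum_ite_eq' Finset.univ i, if_pos (Finset.mem_univ i)]
  have hsecond : (∑ k : Fin n, if (k : ℕ) = (i : ℕ) + 1 then a i * bandInv n a k j else 0)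
      = if h : (i : ℕ) + 1 < n then a i * bandInv n a ⟨(i : ℕ) + 1, h⟩ j else 0 := by
    split_ifs with h
    · rw [Finset.sum_eq_single_of_mem ⟨(i : ℕ) + 1, h⟩ (Finset.mem_univ _)
        (fun k _ hk => if_neg fun heq => hk (Fin.ext heq)), if_pos rfl]
    · exact Finset.sum_eq_zero fun k _ => if_neg (by omega)
  rw [hsecond, Matrix.one_apply]
  simp only [bandInv, of_apply, Fin.ext_iff]
  split_ifs <;> first
    | omega
    | ring1
    | (obtain hq : (i : ℕ) = (j : ℕ) := by omega
       simp only [← hq, Nat.sub_self, pow_zero, Finset.Ico_self, Finset.prod_empty]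
       ring1)
    | (rw [show (j : ℕ) - (i : ℕ) = ((j : ℕ) - ((i : ℕ) + 1)) + 1 from by omega, pow_succ,
         Finset.prod_eq_prod_Ico_succ_bot (show (i : ℕ) < (j : ℕ) from by omega)]
       ring1)

lemma band_inv (n : ℕ) (a : ℕ → F) : (band n a)⁻¹ = bandInv n a :=
  inv_eq_right_inv (band_mul_bandInv n a)

lemma bandInv_self (n : ℕ) (a : ℕ → F) (i : Fin n) : bandInv n a i i = 1 := by
  simp [bandInv]

lemma bandInv_succ (n : ℕ) (a : ℕ → F) (i j : Fin n) (hij : (j : ℕ) = (i : ℕ) + 1) :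
    bandInv n a i j = -(a i) := by
  simp only [bandInv, of_apply, hij, if_pos (Nat.le_succ _)]
  rw [Nat.add_sub_cancel_left, pow_one, Nat.Ico_succ_singleton, Finset.prod_singleton]
  ring

lemma entry_formula (n : ℕ) (a b : ℕ → F) (d : Fin n → F) (i j : Fin n)
    (hij : (j : ℕ) = (i : ℕ) + 1) :
    ((band n a)⁻¹ * Matrix.diagonal d * band n b) i j
      = d i * b (i : ℕ) - a (i : ℕ) * d j := by
  have hne : (j : ℕ) ≠ (i : ℕ) := by omega
  rw [band_inv, Matrix.mul_assoc, Matrix.mul_apply]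
  have hterm : ∀ k : Fin n, bandInv n a i k * (Matrix.diagonal d * band n b) k j
      = (if k = i then d i * b (i : ℕ) else 0) + (if k = j then -(a (i : ℕ)) * d j else 0) := by
    intro k
    rw [Matrix.diagonal_mul]
    rcases eq_or_ne k i with rfl | hk
    · rw [bandInv_self, if_pos rfl, if_neg (fun h => hne (by rw [← h]))]
      simp only [band, of_apply, if_neg hne, if_pos hij]
      ring
    · rcases eq_or_ne k j with rfl | hkj
      · rw [bandInv_succ n a i k hij, if_neg hk, if_pos rfl, (band_unipotent n b).2 k]
        ring
      · rw [if_neg hk, if_neg hkj]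
        rcases lt_or_ge (k : ℕ) (i : ℕ) with h | h
        · have : bandInv n a i k = 0 := by simp only [bandInv, of_apply]; rw [if_neg (by omega)]
          rw [this]; ring
        · have hk' : (i : ℕ) < (k : ℕ) := lt_of_le_of_ne h (fun h' => hk (Fin.ext h'.symm))
          have hkj' : (j : ℕ) < (k : ℕ) := by
            rcases lt_or_ge (j : ℕ) (k : ℕ) with h' | h'
            · exact h'
            · exfalso; exact hkj (Fin.ext (by omega))
          have : band n b k j = 0 := by
            simp only [band, of_apply]; rw [if_neg (by omega), if_neg (by omega)]
          rw [this]; ring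
  rw [Finset.sum_congr rfl fun k _ => hterm k, Finset.sum_add_distrib,
    Finset.sum_ite_eq' Finset.univ i, Finset.sum_ite_eq' Finset.univ j,
    if_pos (Finset.mem_univ i), if_pos (Finset.mem_univ j)]
  ring

end Band

theorem superdiagonal_surjective {F : Type*} [Field F] {n : ℕ} (hn : 2 ≤ n)
    (r s x : Fin n → F) (hr : ∀ i, r i ≠ 0) (hs : ∀ i, s i ≠ 0)
    (hx : ∀ i j : Fin n, i ≠ j → x i ≠ x j) (f g : Fin n → F) :
    ∃ v w : Matrix (Fin n) (Fin n) F, IsUnipotentUpper v ∧ IsUnipotentUpper w ∧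
      ∀ i j : Fin n, (j : ℕ) = (i : ℕ) + 1 →
        (v⁻¹ * Matrix.diagonal (fun i => (r i)⁻¹ * s i) * w) i j = f i ∧
        (w⁻¹ * Matrix.diagonal (fun i => (s i)⁻¹ * r i * x i) * v) i j = g i := by
  classical
  set d : Fin n → F := fun i => (r i)⁻¹ * s i with hd
  set e : Fin n → F := fun i => (s i)⁻¹ * r i * x i with he
  let a : ℕ → F := fun k => if h : k + 1 < n then
      (-(e ⟨k + 1, h⟩) * f ⟨k, Nat.lt_of_succ_lt h⟩
        - d ⟨k, Nat.lt_of_succ_lt h⟩ * g ⟨k, Nat.lt_of_succ_lt h⟩)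
      / (x ⟨k + 1, h⟩ - x ⟨k, Nat.lt_of_succ_lt h⟩) else 0
  let b : ℕ → F := fun k => if h : k + 1 < n then
      (-(d ⟨k + 1, h⟩) * g ⟨k, Nat.lt_of_succ_lt h⟩
        - e ⟨k, Nat.lt_of_succ_lt h⟩ * f ⟨k, Nat.lt_of_succ_lt h⟩)
      / (x ⟨k + 1, h⟩ - x ⟨k, Nat.lt_of_succ_lt h⟩) else 0
  refine ⟨band n a, band n b, band_unipotent n a, band_unipotent n b, ?_⟩
  intro i j hij
  have hin : (i : ℕ) + 1 < n := hij ▸ j.isLt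
  have hj : (⟨(i : ℕ) + 1, hin⟩ : Fin n) = j := Fin.ext hij.symm
  have hΔ : x j - x i ≠ 0 := sub_ne_zero.mpr (hx j i (fun h => by omega))
  have ha : a (i : ℕ) = (-(e j) * f i - d i * g i) / (x j - x i) := by
    simp only [a]
    rw [dif_pos hin]
    simp only [← hij, Fin.eta]
  have hb : b (i : ℕ) = (-(d j) * g i - e i * f i) / (x j - x i) := by
    simp only [b]
    rw [dif_pos hin]
    simp only [← hij, Fin.eta]
  constructor
  · rw [entry_formula n a b d i j hij, ha, hb]
    have hde : ∀ k : Fin n, d k * e k = x k := by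
      intro k
      have h1 := hr k; have h2 := hs k
      rw [hd, he]; field_simp
    have h1 := hde i; have h2 := hde j
    field_simp
    linear_combination (f i) * h2 - (f i) * h1
  · rw [entry_formula n b a e i j hij, ha, hb]
    have hde : ∀ k : Fin n, d k * e k = x k := by
      intro k
      have h1 := hr k; have h2 := hs k
      rw [hd, he]; field_simp
    have h1 := hde i; have h2 := hde j
    field_simp
    linear_combination (g i) * h2 - (g i) * h1
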